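/- Let n ≥ 1 and let r = (r_0, r_1, r_2, …) be a sequence of nonnegative real numbers with Σ_j r_j = 1. Then the random walk on S_n driven by the QS-distribution lumps by descent sets: for all σ, σ' ∈ S_n with Des(σ) = Des(σ') and every subset T of {1,…,n−1}, Σ_{τ : Des(τ) = T} F_{Des(σ∘τ⁻¹)}(r) = Σ_{τ : Des(τ) = T} F_{Des(σ'∘τ⁻¹)}(r). -/

import Mathlib

/-- The descent set of a permutation of `Fin (n+1)`, as a finset of `Fin n`. -/
def Des {n : ℕ} (σ : Equiv.Perm (Fin (n + 1))) : Finset (Fin n) :=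
  Finset.univ.filter (fun i : Fin n => σ i.succ < σ i.castSucc)

/-- The fundamental quasisymmetric function `F_S` evaluated at `r`. -/
noncomputable def Fqs {n : ℕ} (r : ℕ → ℝ) (S : Finset (Fin n)) : ℝ :=
  ∑' p : {i : Fin (n + 1) → ℕ //
      (∀ k : Fin n, i k.castSucc ≤ i k.succ) ∧ ∀ k ∈ S, i k.castSucc < i k.succ},
    ∏ j, r (p.1 j)


lemma mem_Des {n : ℕ} (σ : Equiv.Perm (Fin (n + 1))) (k : Fin n) :
    k ∈ Des σ ↔ σ k.succ < σ k.castSucc := by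
  simp [Des]

/-- adjacent step -/
lemma adj_step {n : ℕ} (π : Equiv.Perm (Fin (n + 1))) (i : Fin (n + 1) → ℕ)
    (hs : ∀ k ∈ Des π, i k.castSucc < i k.succ)
    (a b : Fin (n + 1)) (hab : (b : ℕ) = (a : ℕ) + 1) (heq : i a = i b) :
    π a < π b := by
  have hlt : (a : ℕ) < n := by omega
  set k : Fin n := ⟨a, hlt⟩ with hk
  have ha : k.castSucc = a := by ext; simp [hk]
  have hb : k.succ = b := by ext; simp [hk, hab]
  have hnd : k ∉ Des π := by
    intro hd
    have := hs k hd
    rw [ha, hb] at this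
    omega
  rw [mem_Des, ha, hb] at hnd
  have hne : π a ≠ π b := fun hc => by
    have : a = b := π.injective hc
    omega
  exact lt_of_le_of_ne (le_of_not_gt hnd) hne

/-- if `i` is weakly increasing, strict at descents of `π`, then `π` is strictly
increasing on every interval where `i` is constant. -/
lemma strict_chain {n : ℕ} (π : Equiv.Perm (Fin (n + 1))) (i : Fin (n + 1) → ℕ)
    (hle : ∀ k : Fin n, i k.castSucc ≤ i k.succ)
    (hs : ∀ k ∈ Des π, i k.castSucc < i k.succ) :
    ∀ a b : Fin (n + 1), a < b → i a = i b → π a < π b := by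
  have hmono : Monotone i := Fin.monotone_iff_le_succ.mpr hle
  have key : ∀ d : ℕ, ∀ a b : Fin (n + 1), (b : ℕ) = (a : ℕ) + d + 1 → i a = i b → π a < π b := by
    intro d
    induction d with
    | zero => exact fun a b hab => adj_step π i hs a b hab
    | succ d ih =>
      intro a b hab heq
      have hcv : (a : ℕ) + 1 < n + 1 := by omega
      set c : Fin (n + 1) := ⟨(a : ℕ) + 1, hcv⟩ with hc
      have hac : a < c := by simp [hc, Fin.lt_def]
      have hcb : c < b := by simp [hc, Fin.lt_def]; omega
      have h1 : i a ≤ i c := hmono hac.le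
      have h2 : i c ≤ i b := hmono hcb.le
      have hiac : i a = i c := by omega
      have hicb : i c = i b := by omega
      exact lt_trans (adj_step π i hs a c (by simp [hc]) hiac)
        (ih c b (by simp [hc]; omega) hicb)
  intro a b hab heq
  exact key ((b : ℕ) - (a : ℕ) - 1) a b (by have := (Fin.lt_def.mp hab); omega) heq

/-- Characterization of τ in terms of u = i ∘ τ and σ. -/
lemma char_forward {n : ℕ} (σ τ : Equiv.Perm (Fin (n + 1))) (i : Fin (n + 1) → ℕ)
    (hle : ∀ k : Fin n, i k.castSucc ≤ i k.succ)
    (hs : ∀ k ∈ Des (σ * τ⁻¹), i k.castSucc < i k.succ)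
    (k l : Fin (n + 1)) (hkl : τ k < τ l) :
    i (τ k) < i (τ l) ∨ (i (τ k) = i (τ l) ∧ σ k < σ l) := by
  have hmono : Monotone i := Fin.monotone_iff_le_succ.mpr hle
  rcases lt_or_eq_of_le (hmono hkl.le) with h | h
  · exact Or.inl h
  · right
    refine ⟨h, ?_⟩
    have := strict_chain (σ * τ⁻¹) i hle hs (τ k) (τ l) hkl h
    simpa using this

lemma char_iff {n : ℕ} (σ τ : Equiv.Perm (Fin (n + 1))) (i : Fin (n + 1) → ℕ)
    (hle : ∀ k : Fin n, i k.castSucc ≤ i k.succ)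
    (hs : ∀ k ∈ Des (σ * τ⁻¹), i k.castSucc < i k.succ)
    (k l : Fin (n + 1)) :
    τ k < τ l ↔ (i (τ k) < i (τ l) ∨ (i (τ k) = i (τ l) ∧ σ k < σ l)) := by
  constructor
  · exact char_forward σ τ i hle hs k l
  · intro hP
    rcases lt_trichotomy (τ k) (τ l) with h | h | h
    · exact h
    · have hkl : k = l := τ.injective h
      subst hkl
      rcases hP with h1 | ⟨_, h2⟩ <;> omega
    · rcases char_forward σ τ i hle hs l k h with h1 | ⟨h1, h2⟩ <;>
        rcases hP with h3 | ⟨h3, h4⟩ <;> omega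

/-- A permutation is determined by its comparison relation. -/
lemma perm_eq_of_lt_iff {n : ℕ} (τ τ' : Equiv.Perm (Fin (n + 1)))
    (h : ∀ k l, τ k < τ l ↔ τ' k < τ' l) : τ = τ' := by
  have hsm : StrictMono (fun a => τ' (τ.symm a)) := by
    intro a b hab
    exact (h _ _).mp (by simpa using hab)
  have hrange : Set.range (fun a => τ' (τ.symm a)) = Set.range (id : Fin (n+1) → Fin (n+1)) := by
    rw [Set.range_id]
    exact Set.eq_univ_of_forall (fun x => ⟨τ (τ'.symm x), by simp⟩)
  have inst : WellFoundedLT (Fin (n+1)) := inferInstance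
  have hid : (fun a => τ' (τ.symm a)) = id :=
    (@StrictMono.range_inj (Fin (n+1)) (Fin (n+1)) _ _ inst _ id hsm strictMono_id).mp hrange
  ext k
  have := congrFun hid (τ k)
  simp at this ⊢
  omega

def condSet {n : ℕ} (u : Fin (n + 1) → ℕ) (D : Finset (Fin n)) : Finset (Fin n) :=
  Finset.univ.filter (fun k => u k.succ < u k.castSucc ∨ (u k.succ = u k.castSucc ∧ k ∈ D))

lemma mem_condSet {n : ℕ} (u : Fin (n + 1) → ℕ) (D : Finset (Fin n)) (k : Fin n) :
    k ∈ condSet u D ↔ (u k.succ < u k.castSucc ∨ (u k.succ = u k.castSucc ∧ k ∈ D)) := by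
  simp [condSet]

lemma condSet_comp {n : ℕ} (σ τ : Equiv.Perm (Fin (n + 1))) (i : Fin (n + 1) → ℕ)
    (hle : ∀ k : Fin n, i k.castSucc ≤ i k.succ)
    (hs : ∀ k ∈ Des (σ * τ⁻¹), i k.castSucc < i k.succ) :
    condSet (fun k => i (τ k)) (Des σ) = Des τ := by
  ext k
  rw [mem_condSet, mem_Des, mem_Des]
  exact (char_iff σ τ i hle hs k.succ k.castSucc).symm

/-- Given `u` and `σ`, there is a unique pair `(τ, i)` with `u = i ∘ τ` and `i`
compatible with `Des (σ * τ⁻¹)`. Existence part. -/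
lemma exists_pair {n : ℕ} (σ : Equiv.Perm (Fin (n + 1))) (u : Fin (n + 1) → ℕ) :
    ∃ (τ : Equiv.Perm (Fin (n + 1))) (i : Fin (n + 1) → ℕ),
      (∀ k : Fin n, i k.castSucc ≤ i k.succ) ∧ (∀ k ∈ Des (σ * τ⁻¹), i k.castSucc < i k.succ) ∧
      (fun k => i (τ k)) = u := by
  classical
  set g : Fin (n + 1) → ℕ ×ₗ Fin (n + 1) := fun k => toLex (u k, σ k) with hg
  have hginj : Function.Injective g := by
    intro k l hkl
    have h2 : (ofLex (g k)).2 = (ofLex (g l)).2 := by rw [hkl]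
    exact σ.injective h2
  set s : Equiv.Perm (Fin (n + 1)) := Tuple.sort g with hsdef
  have hsm : StrictMono (g ∘ s) :=
    (Tuple.monotone_sort g).strictMono_of_injective (hginj.comp s.injective)
  set τ : Equiv.Perm (Fin (n + 1)) := s⁻¹ with hτ
  set i : Fin (n + 1) → ℕ := fun a => u (s a) with hi
  have hchar : ∀ k l : Fin (n + 1), τ k < τ l ↔
      (u k < u l ∨ (u k = u l ∧ σ k < σ l)) := by
    intro k l
    have h1 : τ k < τ l ↔ g (s (τ k)) < g (s (τ l)) := (hsm.lt_iff_lt).symm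
    have h2 : s (τ k) = k := by simp [hτ]
    have h3 : s (τ l) = l := by simp [hτ]
    rw [h2, h3] at h1
    rw [h1, hg]
    exact Prod.Lex.lt_iff
  have hueq : (fun k => i (τ k)) = u := by
    funext k
    simp [hi, hτ]
  -- translate hchar to a statement about i = u ∘ s
  have hchar' : ∀ a b : Fin (n + 1), a < b →
      (i a < i b ∨ (i a = i b ∧ σ (s a) < σ (s b))) := by
    intro a b hab
    have := (hchar (s a) (s b)).mp (by simpa [hτ] using hab)
    simpa [hi] using this
  refine ⟨τ, i, ?_, ?_, hueq⟩
  · intro k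
    rcases hchar' k.castSucc k.succ Fin.castSucc_lt_succ with h | ⟨h, _⟩ <;> omega
  · intro k hk
    rw [mem_Des] at hk
    have hπ : ∀ a, (σ * τ⁻¹) a = σ (s a) := by intro a; simp [hτ]
    rw [hπ, hπ] at hk
    rcases hchar' k.castSucc k.succ Fin.castSucc_lt_succ with h | ⟨h, h2⟩
    · exact h
    · exact absurd h2 (by omega)

lemma pair_unique {n : ℕ} (σ : Equiv.Perm (Fin (n + 1)))
    (τ τ' : Equiv.Perm (Fin (n + 1))) (i i' : Fin (n + 1) → ℕ)
    (hle : ∀ k : Fin n, i k.castSucc ≤ i k.succ)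
    (hs : ∀ k ∈ Des (σ * τ⁻¹), i k.castSucc < i k.succ)
    (hle' : ∀ k : Fin n, i' k.castSucc ≤ i' k.succ)
    (hs' : ∀ k ∈ Des (σ * τ'⁻¹), i' k.castSucc < i' k.succ)
    (hu : (fun k => i (τ k)) = fun k => i' (τ' k)) :
    τ = τ' ∧ i = i' := by
  have hττ' : τ = τ' := by
    apply perm_eq_of_lt_iff
    intro k l
    rw [char_iff σ τ i hle hs k l, char_iff σ τ' i' hle' hs' k l,
      congrFun hu k, congrFun hu l]
  subst hττ'
  refine ⟨rfl, ?_⟩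
  funext a
  have := congrFun hu (τ.symm a)
  simpa using this

open scoped ENNReal

noncomputable def FqsE {n : ℕ} (r : ℕ → ℝ) (S : Finset (Fin n)) : ℝ≥0∞ :=
  ∑' p : {i : Fin (n + 1) → ℕ //
      (∀ k : Fin n, i k.castSucc ≤ i k.succ) ∧ ∀ k ∈ S, i k.castSucc < i k.succ},
    ∏ j, ENNReal.ofReal (r (p.1 j))

noncomputable def WE {n : ℕ} (r : ℕ → ℝ) (D T : Finset (Fin n)) : ℝ≥0∞ :=
  ∑' u : {u : Fin (n + 1) → ℕ // condSet u D = T},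
    ∏ j, ENNReal.ofReal (r (u.1 j))

noncomputable def pairEquiv {n : ℕ} (σ : Equiv.Perm (Fin (n + 1))) (T : Finset (Fin n)) :
    (Σ τ : {τ : Equiv.Perm (Fin (n + 1)) // Des τ = T},
      {i : Fin (n + 1) → ℕ //
        (∀ k : Fin n, i k.castSucc ≤ i k.succ) ∧
          ∀ k ∈ Des (σ * τ.1⁻¹), i k.castSucc < i k.succ}) ≃
    {u : Fin (n + 1) → ℕ // condSet u (Des σ) = T} :=
  Equiv.ofBijective
    (fun p => ⟨fun k => p.2.1 (p.1.1 k), by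
      rw [condSet_comp σ p.1.1 p.2.1 p.2.2.1 p.2.2.2]; exact p.1.2⟩) (by
    constructor
    · rintro ⟨⟨τ, hτ⟩, ⟨i, hi⟩⟩ ⟨⟨τ', hτ'⟩, ⟨i', hi'⟩⟩ hEq
      have hu : (fun k => i (τ k)) = fun k => i' (τ' k) := congrArg Subtype.val hEq
      obtain ⟨h1, h2⟩ := pair_unique σ τ τ' i i' hi.1 hi.2 hi'.1 hi'.2 hu
      subst h1; subst h2; rfl
    · rintro ⟨u, hu⟩
      obtain ⟨τ, i, hle, hs, hui⟩ := exists_pair σ u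
      have hτT : Des τ = T := by
        rw [← hu, ← hui, condSet_comp σ τ i hle hs]
      exact ⟨⟨⟨τ, hτT⟩, ⟨i, hle, hs⟩⟩, Subtype.ext hui⟩)

lemma mainE {n : ℕ} (r : ℕ → ℝ) (σ : Equiv.Perm (Fin (n + 1))) (T : Finset (Fin n)) :
    ∑ τ ∈ Finset.univ.filter (fun τ : Equiv.Perm (Fin (n + 1)) => Des τ = T),
      FqsE r (Des (σ * τ⁻¹)) = WE r (Des σ) T := by
  classical
  have h1 : ∑ τ ∈ Finset.univ.filter (fun τ : Equiv.Perm (Fin (n + 1)) => Des τ = T),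
      FqsE r (Des (σ * τ⁻¹)) =
      ∑ τ : {τ : Equiv.Perm (Fin (n + 1)) // Des τ = T}, FqsE r (Des (σ * τ.1⁻¹)) :=
    Finset.sum_subtype _ (fun x => by simp) _
  rw [h1, ← tsum_fintype (L := SummationFilter.unconditional _)]
  have h2 : ∑' τ : {τ : Equiv.Perm (Fin (n + 1)) // Des τ = T}, FqsE r (Des (σ * τ.1⁻¹)) =
      ∑' p : (Σ τ : {τ : Equiv.Perm (Fin (n + 1)) // Des τ = T},
        {i : Fin (n + 1) → ℕ //
          (∀ k : Fin n, i k.castSucc ≤ i k.succ) ∧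
            ∀ k ∈ Des (σ * τ.1⁻¹), i k.castSucc < i k.succ}),
        ∏ j, ENNReal.ofReal (r (p.2.1 j)) :=
    (ENNReal.tsum_sigma'
      (f := fun p : (Σ τ : {τ : Equiv.Perm (Fin (n + 1)) // Des τ = T},
        {i : Fin (n + 1) → ℕ //
          (∀ k : Fin n, i k.castSucc ≤ i k.succ) ∧
            ∀ k ∈ Des (σ * τ.1⁻¹), i k.castSucc < i k.succ}) =>
        ∏ j, ENNReal.ofReal (r (p.2.1 j)))).symm
  rw [h2]
  have h3 : ∀ p : (Σ τ : {τ : Equiv.Perm (Fin (n + 1)) // Des τ = T},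
        {i : Fin (n + 1) → ℕ //
          (∀ k : Fin n, i k.castSucc ≤ i k.succ) ∧
            ∀ k ∈ Des (σ * τ.1⁻¹), i k.castSucc < i k.succ}),
      ∏ j, ENNReal.ofReal (r (p.2.1 j)) =
        ∏ j, ENNReal.ofReal (r (((pairEquiv σ T) p).1 j)) := by
    intro p
    exact (Equiv.prod_comp p.1.1 (fun j => ENNReal.ofReal (r (p.2.1 j)))).symm
  rw [tsum_congr h3]
  exact Equiv.tsum_eq (pairEquiv σ T) (fun u => ∏ j, ENNReal.ofReal (r (u.1 j)))

lemma tsum_ofReal_r (r : ℕ → ℝ) (hr0 : ∀ j, 0 ≤ r j) (hr1 : HasSum r 1) :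
    ∑' j, ENNReal.ofReal (r j) = 1 := by
  rw [← ENNReal.ofReal_tsum_of_nonneg hr0 hr1.summable, hr1.tsum_eq, ENNReal.ofReal_one]

lemma tot (r : ℕ → ℝ) (hr0 : ∀ j, 0 ≤ r j) (hr1 : HasSum r 1) :
    ∀ m : ℕ, ∑' u : Fin m → ℕ, ∏ j, ENNReal.ofReal (r (u j)) = 1 := by
  intro m
  induction m with
  | zero =>
    haveI : Unique (Fin 0 → ℕ) := ⟨⟨fun j => j.elim0⟩, fun u => funext fun j => j.elim0⟩
    rw [tsum_eq_single (default : Fin 0 → ℕ) (fun b hb => absurd (Subsingleton.elim b default) hb)]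
    simp
  | succ m ih =>
    set e : ℕ × (Fin m → ℕ) ≃ (Fin (m + 1) → ℕ) := Fin.consEquiv (fun _ => ℕ) with he
    rw [← Equiv.tsum_eq e (fun u => ∏ j, ENNReal.ofReal (r (u j)))]
    have hval : ∀ p : ℕ × (Fin m → ℕ),
        ∏ j, ENNReal.ofReal (r (e p j)) =
          ENNReal.ofReal (r p.1) * ∏ j, ENNReal.ofReal (r (p.2 j)) := by
      intro p
      have : ∀ j : Fin (m + 1), ENNReal.ofReal (r (e p j)) =
          Fin.cons (α := fun _ : Fin (m + 1) => ℝ≥0∞) (ENNReal.ofReal (r p.1))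
            (fun j => ENNReal.ofReal (r (p.2 j))) j := by
        intro j
        refine Fin.cases ?_ ?_ j <;> simp [e, Fin.consEquiv]
      rw [Finset.prod_congr rfl (fun j _ => this j), Fin.prod_cons]
    rw [tsum_congr hval, ENNReal.tsum_prod']
    simp only [ENNReal.tsum_mul_left]
    rw [ih, ENNReal.tsum_mul_right, tsum_ofReal_r r hr0 hr1]
    simp

lemma summable_full {n : ℕ} (r : ℕ → ℝ) (hr0 : ∀ j, 0 ≤ r j) (hr1 : HasSum r 1) :
    Summable (fun u : Fin (n + 1) → ℕ => ∏ j, r (u j)) := by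
  have h := tot r hr0 hr1 (n + 1)
  have h2 : Summable (fun u : Fin (n + 1) → ℕ =>
      (∏ j, ENNReal.ofReal (r (u j))).toReal) :=
    ENNReal.summable_toReal (by rw [h]; exact ENNReal.one_ne_top)
  refine h2.congr (fun u => ?_)
  rw [ENNReal.toReal_prod]
  exact Finset.prod_congr rfl (fun j _ => ENNReal.toReal_ofReal (hr0 _))

lemma summable_sub {n : ℕ} (r : ℕ → ℝ) (hr0 : ∀ j, 0 ≤ r j) (hr1 : HasSum r 1)
    (P : (Fin (n + 1) → ℕ) → Prop) :
    Summable (fun p : {i : Fin (n + 1) → ℕ // P i} => ∏ j, r (p.1 j)) :=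
  (summable_full r hr0 hr1).subtype {i | P i}

lemma FqsE_eq {n : ℕ} (r : ℕ → ℝ) (hr0 : ∀ j, 0 ≤ r j) (hr1 : HasSum r 1)
    (S : Finset (Fin n)) : FqsE r S = ENNReal.ofReal (Fqs r S) := by
  unfold FqsE Fqs
  have h1 := ENNReal.ofReal_tsum_of_nonneg
    (f := fun p : {i : Fin (n + 1) → ℕ //
        (∀ k : Fin n, i k.castSucc ≤ i k.succ) ∧ ∀ k ∈ S, i k.castSucc < i k.succ} =>
      ∏ j, r (p.1 j))
    (fun p => Finset.prod_nonneg (fun j _ => hr0 _)) (summable_sub r hr0 hr1 _)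
  rw [h1]
  exact tsum_congr fun p => (ENNReal.ofReal_prod_of_nonneg (fun j _ => hr0 _)).symm

/-- the left random walk driven by the QS-distribution lumps by
descent sets: the total transition probability into a descent class `T`
depends only on the descent set of the starting permutation. -/
theorem qs_walk_lumps_by_descents (n : ℕ) (r : ℕ → ℝ)
    (hr0 : ∀ j, 0 ≤ r j) (hr1 : HasSum r 1)
    (σ σ' : Equiv.Perm (Fin (n + 1))) (h : Des σ = Des σ')
    (T : Finset (Fin n)) :
    ∑ τ ∈ Finset.univ.filter (fun τ : Equiv.Perm (Fin (n + 1)) => Des τ = T),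
      Fqs r (Des (σ * τ⁻¹)) =
    ∑ τ ∈ Finset.univ.filter (fun τ : Equiv.Perm (Fin (n + 1)) => Des τ = T),
      Fqs r (Des (σ' * τ⁻¹)) := by
  have key : ∀ σ0 : Equiv.Perm (Fin (n + 1)),
      ∑ τ ∈ Finset.univ.filter (fun τ : Equiv.Perm (Fin (n + 1)) => Des τ = T),
        Fqs r (Des (σ0 * τ⁻¹)) = (WE r (Des σ0) T).toReal := by
    intro σ0
    have hFt : ∀ S : Finset (Fin n), (FqsE r S).toReal = Fqs r S := by
      intro S
      rw [FqsE_eq r hr0 hr1 S]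
      exact ENNReal.toReal_ofReal
        (tsum_nonneg (fun p => Finset.prod_nonneg (fun j _ => hr0 _)))
    calc ∑ τ ∈ Finset.univ.filter (fun τ : Equiv.Perm (Fin (n + 1)) => Des τ = T),
          Fqs r (Des (σ0 * τ⁻¹))
        = ∑ τ ∈ Finset.univ.filter (fun τ : Equiv.Perm (Fin (n + 1)) => Des τ = T),
          (FqsE r (Des (σ0 * τ⁻¹))).toReal :=
          Finset.sum_congr rfl (fun τ _ => (hFt _).symm)
      _ = (∑ τ ∈ Finset.univ.filter (fun τ : Equiv.Perm (Fin (n + 1)) => Des τ = T),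
          FqsE r (Des (σ0 * τ⁻¹))).toReal :=
          (ENNReal.toReal_sum (fun τ _ => by
            rw [FqsE_eq r hr0 hr1]; exact ENNReal.ofReal_ne_top)).symm
      _ = (WE r (Des σ0) T).toReal := by rw [mainE]
  rw [key σ, key σ', h]
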